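/- arXiv:1209.4095 — 2 statements merged into one kernel-verified Lean document; each statement's English description precedes it below -/
import Mathlib

section
/- Let B be an n×n exchange matrix and let (C_α : α ∈ A) be any nonempty family of B-cones. Then the intersection ⋂_{α∈A} C_α is a B-cone. -/
open scoped BigOperators

namespace MutationFanPaper

/-- An exchange matrix: a skew-symmetrizable `n × n` integer matrix. -/
def IsExchangeMatrix {n : ℕ} (B : Matrix (Fin n) (Fin n) ℤ) : Prop :=
  ∃ d : Fin n → ℤ, (∀ i, 0 < d i) ∧ ∀ i j, d i * B i j = -(d j * B j i)

/-- Matrix mutation in direction `k`. -/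
def mutate {n : ℕ} (B : Matrix (Fin n) (Fin n) ℤ) (k : Fin n) : Matrix (Fin n) (Fin n) ℤ :=
  fun i j =>
    if i = k ∨ j = k then -B i j
    else B i j + Int.sign (B k j) * max (B i k * B k j) 0

/-- The mutation map `η_k^B : ℝⁿ → ℝⁿ`. -/
noncomputable def etaStep {n : ℕ} (B : Matrix (Fin n) (Fin n) ℤ) (k : Fin n) (a : Fin n → ℝ) : Fin n → ℝ :=
  fun j =>
    if j = k then -a k
    else if 0 ≤ a k ∧ 0 ≤ B k j then a j + a k * (B k j : ℝ)
    else if a k ≤ 0 ∧ B k j ≤ 0 then a j - a k * (B k j : ℝ)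
    else a j

/-- `etaSeq B κ` is the mutation map `η_κ^B`, where the list `κ` records the indices in
order of application (the head of the list is applied first, using the matrix `B` itself). -/
noncomputable def etaSeq {n : ℕ} (B : Matrix (Fin n) (Fin n) ℤ) : List (Fin n) → (Fin n → ℝ) → Fin n → ℝ
  | [], a => a
  | k :: κ, a => etaSeq (mutate B k) κ (etaStep B k a)

/-- Iterated matrix mutation along a list of indices; the head is applied first. -/
def mutateSeq {n : ℕ} (B : Matrix (Fin n) (Fin n) ℤ) : List (Fin n) → Matrix (Fin n) (Fin n) ℤ
  | [] => B
  | k :: κ => mutateSeq (mutate B k) κ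

/-- The copy of ℤ inside ℝ, as a subring. -/
def intSR : Subring ℝ := (Int.castRingHom ℝ).range

/-- The copy of ℚ inside ℝ, as a subring. -/
noncomputable def ratSR : Subring ℝ := (Rat.castHom ℝ).range

/-- The formal expression `Σ_{i ∈ S} c i • v i` is a `B`-coherent linear relation. -/
def IsBCoherentRel {n : ℕ} (B : Matrix (Fin n) (Fin n) ℤ) {ι : Type*} (S : Finset ι)
    (v : ι → Fin n → ℝ) (c : ι → ℝ) : Prop :=
  ∀ κ : List (Fin n),
    (∑ i ∈ S, c i • etaSeq B κ (v i)) = 0 ∧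
    (∑ i ∈ S, c i • (fun j => min (etaSeq B κ (v i) j) 0)) = 0

/-- The formal expression `a - Σ_{i ∈ S} c i • v i` is a `B`-coherent linear relation. -/
def IsBCoherentDiff {n : ℕ} (B : Matrix (Fin n) (Fin n) ℤ) (a : Fin n → ℝ) {ι : Type*}
    (S : Finset ι) (v : ι → Fin n → ℝ) (c : ι → ℝ) : Prop :=
  ∀ κ : List (Fin n),
    (etaSeq B κ a - ∑ i ∈ S, c i • etaSeq B κ (v i)) = 0 ∧
    ((fun j => min (etaSeq B κ a j) 0) -
      ∑ i ∈ S, c i • (fun j => min (etaSeq B κ (v i) j) 0)) = 0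

/-- The family `b` is an `R`-spanning set for `B` (a family of vectors in `Rⁿ` such that every
`a ∈ Rⁿ` admits a `B`-coherent relation `a - Σ_{i ∈ S} c i • b i` with coefficients in `R`). -/
def SpanningOver {n : ℕ} (R : Subring ℝ) (B : Matrix (Fin n) (Fin n) ℤ) {ι : Type*}
    (b : ι → Fin n → ℝ) : Prop :=
  (∀ i j, b i j ∈ R) ∧
  ∀ a : Fin n → ℝ, (∀ j, a j ∈ R) →
    ∃ (S : Finset ι) (c : ι → ℝ), (∀ i ∈ S, c i ∈ R) ∧ IsBCoherentDiff B a S b c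

/-- The family `b` is an `R`-independent set for `B`. -/
def IndependentOver {n : ℕ} (R : Subring ℝ) (B : Matrix (Fin n) (Fin n) ℤ) {ι : Type*}
    (b : ι → Fin n → ℝ) : Prop :=
  (∀ i j, b i j ∈ R) ∧
  ∀ (S : Finset ι) (c : ι → ℝ), (∀ i ∈ S, c i ∈ R) → IsBCoherentRel B S b c →
    ∀ i ∈ S, c i = 0

/-- The family `b` is an `R`-basis for `B`. -/
def BasisOver {n : ℕ} (R : Subring ℝ) (B : Matrix (Fin n) (Fin n) ℤ) {ι : Type*}
    (b : ι → Fin n → ℝ) : Prop :=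
  SpanningOver R B b ∧ IndependentOver R B b

/-- The family `b` is a positive `R`-basis for `B`. -/
def PositiveBasisOver {n : ℕ} (R : Subring ℝ) (B : Matrix (Fin n) (Fin n) ℤ) {ι : Type*}
    (b : ι → Fin n → ℝ) : Prop :=
  BasisOver R B b ∧
  ∀ a : Fin n → ℝ, (∀ j, a j ∈ R) →
    ∃ (S : Finset ι) (c : ι → ℝ), (∀ i ∈ S, c i ∈ R ∧ 0 ≤ c i) ∧ IsBCoherentDiff B a S b c

/-- The relation `a ≡^B a'`: all mutation maps give componentwise equal signs. -/
def eqB {n : ℕ} (B : Matrix (Fin n) (Fin n) ℤ) (a a' : Fin n → ℝ) : Prop :=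
  ∀ (κ : List (Fin n)) (j : Fin n),
    Real.sign (etaSeq B κ a j) = Real.sign (etaSeq B κ a' j)

/-- A `B`-class: an equivalence class of `≡^B`. -/
def IsBClass {n : ℕ} (B : Matrix (Fin n) (Fin n) ℤ) (C : Set (Fin n → ℝ)) : Prop :=
  ∃ a, C = {a' | eqB B a a'}

/-- A `B`-cone: the closure of a `B`-class. -/
def IsBCone {n : ℕ} (B : Matrix (Fin n) (Fin n) ℤ) (C : Set (Fin n → ℝ)) : Prop :=
  ∃ D, IsBClass B D ∧ C = closure D

/-- A convex cone: a set closed under addition and positive scaling. -/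
def IsConvexCone {n : ℕ} (C : Set (Fin n → ℝ)) : Prop :=
  (∀ x ∈ C, ∀ y ∈ C, x + y ∈ C) ∧ ∀ x ∈ C, ∀ r : ℝ, 0 < r → r • x ∈ C

/-- `F` is a face of the convex cone `C`: a convex subset such that any line segment
contained in `C` whose interior meets `F` lies entirely in `F`. -/
def IsFaceOf {n : ℕ} (C F : Set (Fin n → ℝ)) : Prop :=
  F ⊆ C ∧ Convex ℝ F ∧
    ∀ x y : Fin n → ℝ, segment ℝ x y ⊆ C → (openSegment ℝ x y ∩ F).Nonempty →
      segment ℝ x y ⊆ F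

/-- The mutation fan `ℱ_B`: all `B`-cones and all faces of `B`-cones. -/
def MutFan {n : ℕ} (B : Matrix (Fin n) (Fin n) ℤ) : Set (Set (Fin n → ℝ)) :=
  {C | IsBCone B C ∨ ∃ D, IsBCone B D ∧ IsFaceOf D C}

/-- A fan: a collection of closed convex cones, closed under taking faces, in which the
intersection of any two cones is a face of each. -/
def IsFan {n : ℕ} (F : Set (Set (Fin n → ℝ))) : Prop :=
  (∀ C ∈ F, IsClosed C ∧ IsConvexCone C) ∧
  (∀ C ∈ F, ∀ G, IsFaceOf C G → G ∈ F) ∧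
  ∀ C ∈ F, ∀ D ∈ F, IsFaceOf C (C ∩ D) ∧ IsFaceOf D (C ∩ D)

/-- A set of vectors is sign-coherent if no two of its members have strictly opposite
signs in any coordinate. -/
def SignCoherentSet {n : ℕ} (S : Set (Fin n → ℝ)) : Prop :=
  ∀ x ∈ S, ∀ y ∈ S, ∀ j, ¬(x j < 0 ∧ 0 < y j)

/-- The ray spanned by a vector `v`. -/
def rayOf {n : ℕ} (v : Fin n → ℝ) : Set (Fin n → ℝ) :=
  {x | ∃ t : ℝ, 0 ≤ t ∧ x = t • v}

/-- `C` is a ray of the fan `F`: a one-dimensional cone belonging to `F`. -/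
def IsRayOf {n : ℕ} (F : Set (Set (Fin n → ℝ))) (C : Set (Fin n → ℝ)) : Prop :=
  C ∈ F ∧ ∃ v : Fin n → ℝ, v ≠ 0 ∧ C = rayOf v

/-- A simplicial cone: the nonnegative span of finitely many linearly independent vectors. -/
def IsSimplicialCone {n : ℕ} (C : Set (Fin n → ℝ)) : Prop :=
  ∃ (k : ℕ) (v : Fin k → Fin n → ℝ), LinearIndependent ℝ v ∧
    C = {x | ∃ c : Fin k → ℝ, (∀ i, 0 ≤ c i) ∧ x = ∑ i, c i • v i}

/-- A rational cone: the nonnegative span of finitely many rational vectors. -/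
def IsRationalCone {n : ℕ} (C : Set (Fin n → ℝ)) : Prop :=
  ∃ (k : ℕ) (v : Fin k → Fin n → ℝ), (∀ i j, ∃ q : ℚ, v i j = (q : ℝ)) ∧
    C = {x | ∃ c : Fin k → ℝ, (∀ i, 0 ≤ c i) ∧ x = ∑ i, c i • v i}

/-- `F'` is the rational part of the fan `F`. -/
def IsRationalPart {n : ℕ} (F F' : Set (Set (Fin n → ℝ))) : Prop :=
  IsFan F' ∧ (∀ C ∈ F', IsRationalCone C) ∧
  (∀ C ∈ F', ∃ D ∈ F, C ⊆ D) ∧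
  ∀ C ∈ F, ∃ D ∈ F', D ⊆ C ∧ (∀ D' ∈ F', D' ⊆ C → D' ⊆ D) ∧
    ∀ x ∈ C, (∀ j, ∃ q : ℚ, x j = (q : ℝ)) → x ∈ D

/-- `v` is the smallest nonzero integer vector in the cone `C`. -/
def IsSmallestIntVec {n : ℕ} (C : Set (Fin n → ℝ)) (v : Fin n → ℝ) : Prop :=
  v ∈ C ∧ v ≠ 0 ∧ (∀ j, ∃ m : ℤ, v j = (m : ℝ)) ∧
    ∀ w ∈ C, w ≠ 0 → (∀ j, ∃ m : ℤ, w j = (m : ℝ)) → ‖v‖ ≤ ‖w‖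

end MutationFanPaper

namespace MutationFanPaper

section Aux

variable {n : ℕ}

private lemma etaStep_eq (B : Matrix (Fin n) (Fin n) ℤ) (k : Fin n) (a : Fin n → ℝ)
    (j : Fin n) :
    etaStep B k a j = if j = k then -a k
      else if 0 ≤ B k j then a j + max (a k * (B k j : ℝ)) 0
      else a j - max (a k * (B k j : ℝ)) 0 := by
  unfold etaStep
  by_cases hjk : j = k
  · simp [hjk]
  · simp only [hjk, if_false]
    by_cases hB : 0 ≤ B k j
    · have hc : (0 : ℝ) ≤ (B k j : ℝ) := by exact_mod_cast hB
      rw [if_pos hB]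
      by_cases hak : 0 ≤ a k
      · rw [if_pos ⟨hak, hB⟩, max_eq_left (mul_nonneg hak hc)]
      · have hak' : a k ≤ 0 := le_of_not_ge hak
        rw [if_neg (fun h => hak h.1),
          max_eq_right (mul_nonpos_iff.mpr (Or.inr ⟨hak', hc⟩))]
        split_ifs with h2
        · have h0 : (B k j : ℝ) = 0 := by exact_mod_cast le_antisymm h2.2 hB
          rw [h0]; ring
        · ring
    · have hBlt : B k j < 0 := lt_of_not_ge hB
      have hc : (B k j : ℝ) < 0 := by exact_mod_cast hBlt
      rw [if_neg hB]
      by_cases hak : a k ≤ 0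
      · rw [if_neg (fun h => hB h.2), if_pos ⟨hak, hBlt.le⟩,
          max_eq_left (mul_nonneg_iff.mpr (Or.inr ⟨hak, hc.le⟩))]
      · have hak' : 0 ≤ a k := le_of_not_ge hak
        rw [if_neg (fun h => hB h.2), if_neg (fun h => hak h.1),
          max_eq_right (mul_nonpos_iff.mpr (Or.inl ⟨hak', hc.le⟩))]
        ring

private lemma max_comb {u v c x y : ℝ} (huv : 0 ≤ u * v) (hx : 0 ≤ x) (hy : 0 ≤ y) :
    max ((x * u + y * v) * c) 0 = x * max (u * c) 0 + y * max (v * c) 0 := by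
  rcases mul_nonneg_iff.mp huv with ⟨hu, hv⟩ | ⟨hu, hv⟩ <;> rcases le_total 0 c with hc | hc
  · rw [max_eq_left (mul_nonneg (add_nonneg (mul_nonneg hx hu) (mul_nonneg hy hv)) hc),
      max_eq_left (mul_nonneg hu hc), max_eq_left (mul_nonneg hv hc)]
    ring
  · rw [max_eq_right (mul_nonpos_iff.mpr
        (Or.inl ⟨add_nonneg (mul_nonneg hx hu) (mul_nonneg hy hv), hc⟩)),
      max_eq_right (mul_nonpos_iff.mpr (Or.inl ⟨hu, hc⟩)),
      max_eq_right (mul_nonpos_iff.mpr (Or.inl ⟨hv, hc⟩))]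
    ring
  · rw [max_eq_right (mul_nonpos_iff.mpr
        (Or.inr ⟨add_nonpos (mul_nonpos_iff.mpr (Or.inl ⟨hx, hu⟩))
          (mul_nonpos_iff.mpr (Or.inl ⟨hy, hv⟩)), hc⟩)),
      max_eq_right (mul_nonpos_iff.mpr (Or.inr ⟨hu, hc⟩)),
      max_eq_right (mul_nonpos_iff.mpr (Or.inr ⟨hv, hc⟩))]
    ring
  · rw [max_eq_left (mul_nonneg_iff.mpr
        (Or.inr ⟨add_nonpos (mul_nonpos_iff.mpr (Or.inl ⟨hx, hu⟩))
          (mul_nonpos_iff.mpr (Or.inl ⟨hy, hv⟩)), hc⟩)),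
      max_eq_left (mul_nonneg_iff.mpr (Or.inr ⟨hu, hc⟩)),
      max_eq_left (mul_nonneg_iff.mpr (Or.inr ⟨hv, hc⟩))]
    ring

private lemma etaStep_add (B : Matrix (Fin n) (Fin n) ℤ) (k : Fin n) {a a' : Fin n → ℝ}
    {x y : ℝ} (h : 0 ≤ a k * a' k) (hx : 0 ≤ x) (hy : 0 ≤ y) :
    etaStep B k (x • a + y • a') = x • etaStep B k a + y • etaStep B k a' := by
  funext j
  simp only [Pi.add_apply, Pi.smul_apply, smul_eq_mul, etaStep_eq]
  by_cases hjk : j = k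
  · simp only [hjk, if_true, if_pos rfl]
    ring
  · simp only [hjk, if_false]
    rw [max_comb h hx hy]
    split_ifs with hB
    · ring
    · ring

/-- Sign-coherence of a pair under all mutation maps. -/
private def Coh (B : Matrix (Fin n) (Fin n) ℤ) (a a' : Fin n → ℝ) : Prop :=
  ∀ (κ : List (Fin n)) (j : Fin n), 0 ≤ etaSeq B κ a j * etaSeq B κ a' j

private lemma etaSeq_add (κ : List (Fin n)) :
    ∀ (B : Matrix (Fin n) (Fin n) ℤ) {a a' : Fin n → ℝ} {x y : ℝ},
      Coh B a a' → 0 ≤ x → 0 ≤ y →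
      etaSeq B κ (x • a + y • a') = x • etaSeq B κ a + y • etaSeq B κ a' := by
  induction κ with
  | nil => intro B a a' x y _ _ _; rfl
  | cons k κ ih =>
      intro B a a' x y h hx hy
      show etaSeq (mutate B k) κ (etaStep B k (x • a + y • a')) = _
      have h0 : 0 ≤ a k * a' k := h [] k
      rw [etaStep_add B k h0 hx hy]
      exact ih (mutate B k) (fun κ' j => h (k :: κ') j) hx hy

private lemma etaSeq_smul (κ : List (Fin n)) (B : Matrix (Fin n) (Fin n) ℤ)
    {t : ℝ} (ht : 0 ≤ t) (a : Fin n → ℝ) :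
    etaSeq B κ (t • a) = t • etaSeq B κ a := by
  have h := etaSeq_add κ B (a := a) (a' := a) (x := t) (y := 0)
    (fun κ' j => mul_self_nonneg _) ht le_rfl
  simpa using h

private lemma etaSeq_zero (κ : List (Fin n)) (B : Matrix (Fin n) (Fin n) ℤ) :
    etaSeq B κ (0 : Fin n → ℝ) = 0 := by
  have h := etaSeq_smul κ B (t := 0) le_rfl (0 : Fin n → ℝ)
  simpa using h

private lemma continuous_etaStep (B : Matrix (Fin n) (Fin n) ℤ) (k : Fin n) :
    Continuous (etaStep B k) := by
  have hrw : etaStep B k = fun a j => if j = k then -a k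
      else if 0 ≤ B k j then a j + max (a k * (B k j : ℝ)) 0
      else a j - max (a k * (B k j : ℝ)) 0 := by
    funext a j; exact etaStep_eq B k a j
  rw [hrw]
  apply continuous_pi
  intro j
  by_cases hjk : j = k
  · simp only [hjk, if_true, if_pos rfl]
    exact (continuous_apply k).neg
  · simp only [hjk, if_false]
    by_cases hB : 0 ≤ B k j
    · simp only [hB, if_true, if_pos hB]
      exact (continuous_apply j).add
        (((continuous_apply k).mul continuous_const).max continuous_const)
    · simp only [hB, if_false]
      exact (continuous_apply j).sub
        (((continuous_apply k).mul continuous_const).max continuous_const)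

private lemma continuous_etaSeq (κ : List (Fin n)) :
    ∀ B : Matrix (Fin n) (Fin n) ℤ, Continuous (etaSeq B κ) := by
  induction κ with
  | nil => intro B; exact continuous_id
  | cons k κ ih =>
      intro B
      exact (ih (mutate B k)).comp (continuous_etaStep B k)

/-- Weak sign agreement with `v` under all mutation maps. -/
private def wMem (B : Matrix (Fin n) (Fin n) ℤ) (v x : Fin n → ℝ) : Prop :=
  ∀ (κ : List (Fin n)) (j : Fin n),
    (0 ≤ etaSeq B κ v j → 0 ≤ etaSeq B κ x j) ∧
    (etaSeq B κ v j ≤ 0 → etaSeq B κ x j ≤ 0)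

private lemma coh_of_wMem_pair {B : Matrix (Fin n) (Fin n) ℤ} {v x y : Fin n → ℝ}
    (hx : wMem B v x) (hy : wMem B v y) : Coh B x y := by
  intro κ j
  rcases le_total 0 (etaSeq B κ v j) with h | h
  · exact mul_nonneg ((hx κ j).1 h) ((hy κ j).1 h)
  · exact mul_nonneg_iff.mpr (Or.inr ⟨(hx κ j).2 h, (hy κ j).2 h⟩)

private lemma coh_of_wMem {B : Matrix (Fin n) (Fin n) ℤ} {v x : Fin n → ℝ}
    (hx : wMem B v x) : Coh B v x := by
  intro κ j
  rcases le_total 0 (etaSeq B κ v j) with h | h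
  · exact mul_nonneg h ((hx κ j).1 h)
  · exact mul_nonneg_iff.mpr (Or.inr ⟨h, (hx κ j).2 h⟩)

private lemma isClosed_wMem (B : Matrix (Fin n) (Fin n) ℤ) (v : Fin n → ℝ) :
    IsClosed {x | wMem B v x} := by
  have hrw : {x | wMem B v x} = ⋂ (κ : List (Fin n)) (j : Fin n),
      ({x : Fin n → ℝ | 0 ≤ etaSeq B κ v j → 0 ≤ etaSeq B κ x j} ∩
       {x : Fin n → ℝ | etaSeq B κ v j ≤ 0 → etaSeq B κ x j ≤ 0}) := by
    ext x
    simp only [Set.mem_setOf_eq, Set.mem_iInter, Set.mem_inter_iff, wMem]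
  rw [hrw]
  refine isClosed_iInter fun κ => isClosed_iInter fun j => IsClosed.inter ?_ ?_
  · by_cases h : 0 ≤ etaSeq B κ v j
    · have : {x : Fin n → ℝ | 0 ≤ etaSeq B κ v j → 0 ≤ etaSeq B κ x j} =
          {x : Fin n → ℝ | 0 ≤ etaSeq B κ x j} := by
        ext x; simp [h]
      rw [this]
      exact isClosed_le continuous_const ((continuous_apply j).comp (continuous_etaSeq κ B))
    · have : {x : Fin n → ℝ | 0 ≤ etaSeq B κ v j → 0 ≤ etaSeq B κ x j} = Set.univ := by
        ext x; simp [h]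
      rw [this]; exact isClosed_univ
  · by_cases h : etaSeq B κ v j ≤ 0
    · have : {x : Fin n → ℝ | etaSeq B κ v j ≤ 0 → etaSeq B κ x j ≤ 0} =
          {x : Fin n → ℝ | etaSeq B κ x j ≤ 0} := by
        ext x; simp [h]
      rw [this]
      exact isClosed_le ((continuous_apply j).comp (continuous_etaSeq κ B)) continuous_const
    · have : {x : Fin n → ℝ | etaSeq B κ v j ≤ 0 → etaSeq B κ x j ≤ 0} = Set.univ := by
        ext x; simp [h]
      rw [this]; exact isClosed_univ

private lemma sign_imp {u w : ℝ} (h : Real.sign u = Real.sign w) :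
    (0 ≤ u → 0 ≤ w) ∧ (u ≤ 0 → w ≤ 0) := by
  simp only [Real.sign] at h
  split_ifs at h <;> simp only [not_lt] at * <;> constructor <;> intro h0 <;> linarith

private lemma closure_class (B : Matrix (Fin n) (Fin n) ℤ) (v : Fin n → ℝ) :
    closure {x | eqB B v x} = {x | wMem B v x} := by
  apply Set.Subset.antisymm
  · apply closure_minimal _ (isClosed_wMem B v)
    intro x hx κ j
    exact sign_imp (hx κ j)
  · intro x hx
    have hcoh : Coh B v x := coh_of_wMem hx
    have key : ∀ t : ℝ, 0 < t → t ≤ 1 → eqB B v (t • v + (1 - t) • x) := by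
      intro t ht ht1 κ j
      rw [etaSeq_add κ B hcoh ht.le (by linarith)]
      simp only [Pi.add_apply, Pi.smul_apply, smul_eq_mul]
      rcases lt_trichotomy (etaSeq B κ v j) 0 with hv | hv | hv
      · have hx' : etaSeq B κ x j ≤ 0 := (hx κ j).2 hv.le
        rw [Real.sign_of_neg hv, Real.sign_of_neg (by nlinarith)]
      · have h1 : etaSeq B κ x j = 0 := le_antisymm ((hx κ j).2 hv.le) ((hx κ j).1 hv.ge)
        rw [hv, h1]
        norm_num
      · have hx' : 0 ≤ etaSeq B κ x j := (hx κ j).1 hv.le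
        rw [Real.sign_of_pos hv, Real.sign_of_pos (by nlinarith)]
    have htend : Filter.Tendsto
        (fun m : ℕ => ((1 : ℝ) / (m + 1)) • v + (1 - (1 : ℝ) / (m + 1)) • x)
        Filter.atTop (nhds x) := by
      have h0 : Filter.Tendsto (fun m : ℕ => (1 : ℝ) / (m + 1)) Filter.atTop (nhds 0) :=
        tendsto_one_div_add_atTop_nhds_zero_nat
      have hc : Filter.Tendsto (fun _ : ℕ => (1 : ℝ)) Filter.atTop (nhds 1) :=
        tendsto_const_nhds
      have hcomb := (h0.smul_const v).add ((hc.sub h0).smul_const x)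
      simpa using hcomb
    refine mem_closure_of_tendsto htend (Filter.Eventually.of_forall fun m => ?_)
    have hm0 : (0 : ℝ) < 1 / (m + 1) := by positivity
    have hm1 : (1 : ℝ) / (m + 1) ≤ 1 := by
      rw [div_le_one (by positivity)]
      have : (0 : ℝ) ≤ (m : ℝ) := Nat.cast_nonneg m
      linarith
    exact key _ hm0 hm1

end Aux

end MutationFanPaper

namespace MutationFanPaper

/-- An arbitrary (nonempty) intersection of `B`-cones is a `B`-cone. -/
theorem iInter_bCone {n : ℕ} (hn : 1 ≤ n) (B : Matrix (Fin n) (Fin n) ℤ)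
    (hB : IsExchangeMatrix B) {A : Type} [Nonempty A]
    (C : A → Set (Fin n → ℝ)) (hC : ∀ α, IsBCone B (C α)) :
    IsBCone B (⋂ α, C α) := by
  classical
  have hrep : ∀ α, ∃ v, C α = {x | wMem B v x} := by
    intro α
    obtain ⟨D, ⟨v, rfl⟩, hCD⟩ := hC α
    exact ⟨v, by rw [hCD, closure_class]⟩
  choose a ha using hrep
  have hmem : ∀ x ∈ ⋂ α, C α, ∀ α, wMem B (a α) x := by
    intro x hx α
    have h := Set.mem_iInter.mp hx α
    rw [ha α] at h
    exact h
  have α₀ : A := Classical.arbitrary A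
  have hcohI : ∀ x ∈ ⋂ α, C α, ∀ y ∈ ⋂ α, C α, Coh B x y := fun x hx y hy =>
    coh_of_wMem_pair (hmem x hx α₀) (hmem y hy α₀)
  have h0I : (0 : Fin n → ℝ) ∈ ⋂ α, C α := by
    refine Set.mem_iInter.mpr fun α => ?_
    rw [ha α]
    simp only [Set.mem_setOf_eq]
    intro κ j
    rw [etaSeq_zero κ B]
    simp
  have haddI : ∀ x ∈ ⋂ α, C α, ∀ y ∈ ⋂ α, C α, x + y ∈ ⋂ α, C α := by
    intro x hx y hy
    have hE : ∀ κ, etaSeq B κ (x + y) = etaSeq B κ x + etaSeq B κ y := by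
      intro κ
      have h := etaSeq_add κ B (hcohI x hx y hy) zero_le_one zero_le_one
      simpa using h
    refine Set.mem_iInter.mpr fun α => ?_
    rw [ha α]
    simp only [Set.mem_setOf_eq]
    intro κ j
    have h1 := hmem x hx α κ j
    have h2 := hmem y hy α κ j
    rw [hE κ]
    simp only [Pi.add_apply]
    exact ⟨fun h0 => add_nonneg (h1.1 h0) (h2.1 h0),
      fun h0 => add_nonpos (h1.2 h0) (h2.2 h0)⟩
  have hsmulI : ∀ x ∈ ⋂ α, C α, ∀ t : ℝ, 0 ≤ t → t • x ∈ ⋂ α, C α := by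
    intro x hx t ht
    refine Set.mem_iInter.mpr fun α => ?_
    rw [ha α]
    simp only [Set.mem_setOf_eq]
    intro κ j
    have h1 := hmem x hx α κ j
    rw [etaSeq_smul κ B ht]
    simp only [Pi.smul_apply, smul_eq_mul]
    exact ⟨fun h0 => mul_nonneg ht (h1.1 h0),
      fun h0 => mul_nonpos_iff.mpr (Or.inl ⟨ht, h1.2 h0⟩)⟩
  let P : List (Fin n) × Fin n → Prop := fun p => ∃ x ∈ ⋂ α, C α, etaSeq B p.1 x p.2 ≠ 0
  let w : List (Fin n) × Fin n → (Fin n → ℝ) := fun p => if h : P p then h.choose else 0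
  have hwI : ∀ p, w p ∈ ⋂ α, C α := by
    intro p
    by_cases h : P p
    · simp only [w, dif_pos h]
      exact h.choose_spec.1
    · simp only [w, dif_neg h]
      exact h0I
  have hwP : ∀ p, P p → etaSeq B p.1 (w p) p.2 ≠ 0 := by
    intro p h
    simp only [w, dif_pos h]
    exact h.choose_spec.2
  let ε : List (Fin n) × Fin n → ℝ := fun p =>
    (1 / 2 : ℝ) ^ (Encodable.encode p) / (1 + ‖w p‖)
  have hε : ∀ p, 0 < ε p := fun p => by positivity
  let f : List (Fin n) × Fin n → (Fin n → ℝ) := fun p => ε p • w p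
  have hfI : ∀ p, f p ∈ ⋂ α, C α := fun p => hsmulI _ (hwI p) _ (hε p).le
  have hsum : Summable f := by
    apply Summable.of_norm_bounded (g := fun p => (1 / 2 : ℝ) ^ (Encodable.encode p))
      (summable_geometric_two.comp_injective Encodable.encode_injective)
    intro p
    show ‖ε p • w p‖ ≤ _
    rw [norm_smul, Real.norm_eq_abs, abs_of_pos (hε p)]
    have h1 : (0 : ℝ) ≤ ‖w p‖ := norm_nonneg _
    have h2 : (0 : ℝ) < (1 / 2 : ℝ) ^ (Encodable.encode p) := by positivity
    show (1 / 2 : ℝ) ^ (Encodable.encode p) / (1 + ‖w p‖) * ‖w p‖ ≤ _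
    rw [div_mul_eq_mul_div, div_le_iff₀ (by positivity)]
    nlinarith
  set astar := ∑' p, f p with hastar
  have hhs : HasSum f astar := hsum.hasSum
  have hfin : ∀ s : Finset (List (Fin n) × Fin n),
      (∑ p ∈ s, f p) ∈ ⋂ α, C α ∧
      ∀ κ, etaSeq B κ (∑ p ∈ s, f p) = ∑ p ∈ s, etaSeq B κ (f p) := by
    intro s
    induction s using Finset.induction_on with
    | empty =>
        refine ⟨by simpa using h0I, fun κ => by simp [etaSeq_zero]⟩
    | @insert q s' hq ih =>
        constructor
        · rw [Finset.sum_insert hq]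
          exact haddI _ (hfI q) _ ih.1
        · intro κ
          rw [Finset.sum_insert hq, Finset.sum_insert hq]
          have hE : etaSeq B κ (f q + ∑ p ∈ s', f p) =
              etaSeq B κ (f q) + etaSeq B κ (∑ p ∈ s', f p) := by
            have h := etaSeq_add κ B (hcohI _ (hfI q) _ ih.1) zero_le_one zero_le_one
            simpa using h
          rw [hE, ih.2 κ]
  have hfE : ∀ p κ (j : Fin n), etaSeq B κ (f p) j = ε p * etaSeq B κ (w p) j := by
    intro p κ j
    show etaSeq B κ (ε p • w p) j = _
    rw [etaSeq_smul κ B (hε p).le]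
    simp
  have hEsum : ∀ κ (j : Fin n),
      HasSum (fun p => etaSeq B κ (f p) j) (etaSeq B κ astar j) := by
    intro κ j
    have hcont : Continuous fun z : Fin n → ℝ => etaSeq B κ z j :=
      (continuous_apply j).comp (continuous_etaSeq κ B)
    have h1 : Filter.Tendsto (fun s : Finset (List (Fin n) × Fin n) =>
        etaSeq B κ (∑ p ∈ s, f p) j) Filter.atTop (nhds (etaSeq B κ astar j)) :=
      (hcont.tendsto astar).comp hhs
    have h2 : (fun s : Finset (List (Fin n) × Fin n) => etaSeq B κ (∑ p ∈ s, f p) j) =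
        fun s => ∑ p ∈ s, etaSeq B κ (f p) j := by
      funext s
      rw [(hfin s).2 κ]
      simp
    show Filter.Tendsto _ Filter.atTop (nhds (etaSeq B κ astar j))
    rw [← h2]
    exact h1
  have hsign : ∀ κ (j : Fin n),
      (∀ x ∈ ⋂ α, C α, etaSeq B κ x j = 0) ∧ etaSeq B κ astar j = 0 ∨
      0 < etaSeq B κ astar j ∧ (∀ x ∈ ⋂ α, C α, 0 ≤ etaSeq B κ x j) ∧
        (∃ y ∈ ⋂ α, C α, 0 < etaSeq B κ y j) ∨
      etaSeq B κ astar j < 0 ∧ (∀ x ∈ ⋂ α, C α, etaSeq B κ x j ≤ 0) ∧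
        (∃ y ∈ ⋂ α, C α, etaSeq B κ y j < 0) := by
    intro κ j
    by_cases hP : P (κ, j)
    · rcases le_total 0 (etaSeq B κ (a α₀) j) with h0 | h0
      · right; left
        have hall : ∀ x ∈ ⋂ α, C α, 0 ≤ etaSeq B κ x j := fun x hx =>
          (hmem x hx α₀ κ j).1 h0
        have hw0 : 0 < etaSeq B κ (w (κ, j)) j :=
          lt_of_le_of_ne (hall _ (hwI (κ, j))) (Ne.symm (hwP (κ, j) hP))
        refine ⟨?_, hall, ⟨w (κ, j), hwI (κ, j), hw0⟩⟩
        have hle : etaSeq B κ (f (κ, j)) j ≤ etaSeq B κ astar j := by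
          apply le_hasSum (hEsum κ j) (κ, j)
          intro p _
          rw [hfE]
          exact mul_nonneg (hε p).le (hall _ (hwI p))
        have hlt : 0 < etaSeq B κ (f (κ, j)) j := by
          rw [hfE]
          exact mul_pos (hε (κ, j)) hw0
        linarith
      · right; right
        have hall : ∀ x ∈ ⋂ α, C α, etaSeq B κ x j ≤ 0 := fun x hx =>
          (hmem x hx α₀ κ j).2 h0
        have hw0 : etaSeq B κ (w (κ, j)) j < 0 :=
          lt_of_le_of_ne (hall _ (hwI (κ, j))) (hwP (κ, j) hP)
        refine ⟨?_, hall, ⟨w (κ, j), hwI (κ, j), hw0⟩⟩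
        have hneg : HasSum (fun p => -etaSeq B κ (f p) j) (-etaSeq B κ astar j) :=
          (hEsum κ j).neg
        have hle : -etaSeq B κ (f (κ, j)) j ≤ -etaSeq B κ astar j := by
          apply le_hasSum hneg (κ, j)
          intro p _
          rw [hfE]
          exact neg_nonneg.mpr (mul_nonpos_iff.mpr (Or.inl ⟨(hε p).le, hall _ (hwI p)⟩))
        have hlt : etaSeq B κ (f (κ, j)) j < 0 := by
          rw [hfE]
          exact mul_neg_of_pos_of_neg (hε (κ, j)) hw0
        linarith
    · left
      have hall : ∀ x ∈ ⋂ α, C α, etaSeq B κ x j = 0 := by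
        intro x hx
        by_contra hne
        exact hP ⟨x, hx, hne⟩
      refine ⟨hall, ?_⟩
      have hzero : HasSum (fun p => etaSeq B κ (f p) j) 0 := by
        have hz : (fun p => etaSeq B κ (f p) j) = fun _ => 0 := by
          funext p
          rw [hfE, hall _ (hwI p), mul_zero]
        rw [hz]
        exact hasSum_zero
      exact (hEsum κ j).unique hzero
  refine ⟨{x | eqB B astar x}, ⟨astar, rfl⟩, ?_⟩
  rw [closure_class]
  apply Set.Subset.antisymm
  · intro x hx
    simp only [Set.mem_setOf_eq]
    intro κ j
    rcases hsign κ j with ⟨hall, h0⟩ | ⟨hpos, hall, -⟩ | ⟨hneg, hall, -⟩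
    · have hx0 := hall x hx
      constructor <;> intro _ <;> simp [hx0]
    · exact ⟨fun _ => hall x hx, fun h => absurd h (not_le.mpr hpos)⟩
    · exact ⟨fun h => absurd h (not_le.mpr hneg), fun _ => hall x hx⟩
  · intro x hx
    simp only [Set.mem_setOf_eq] at hx
    refine Set.mem_iInter.mpr fun α => ?_
    rw [ha α]
    simp only [Set.mem_setOf_eq]
    intro κ j
    rcases hsign κ j with ⟨hall, h0⟩ | ⟨hpos, hall, y, hyI, hy⟩ | ⟨hneg, hall, y, hyI, hy⟩
    · have hx0 : etaSeq B κ x j = 0 :=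
        le_antisymm ((hx κ j).2 h0.le) ((hx κ j).1 h0.ge)
      constructor <;> intro _ <;> simp [hx0]
    · have hx0 : 0 ≤ etaSeq B κ x j := (hx κ j).1 hpos.le
      refine ⟨fun _ => hx0, fun hle => ?_⟩
      have hc := (hmem y hyI α κ j).2 hle
      linarith
    · have hx0 : etaSeq B κ x j ≤ 0 := (hx κ j).2 hneg.le
      refine ⟨fun hge => ?_, fun _ => hx0⟩
      have hc := (hmem y hyI α κ j).1 hge
      linarith

end MutationFanPaper
end

section
/- Let B be an n×n exchange matrix and let C ⊆ ℝ^n. Then C is contained in some B-cone if and only if the set η_κ^B(C) is sign-coherent for every finite sequence κ of indices in [n]. -/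
open scoped BigOperators

namespace MutationFanPaper

lemma etaStep_apply {n : ℕ} (B : Matrix (Fin n) (Fin n) ℤ) (k : Fin n) (a : Fin n → ℝ) (j : Fin n) :
    etaStep B k a j = if j = k then -a k
      else a j + (Int.sign (B k j) : ℝ) * max (a k * (B k j : ℝ)) 0 := by
  unfold etaStep
  by_cases hjk : j = k
  · simp [hjk]
  · simp only [if_neg hjk]
    rcases lt_trichotomy (B k j) 0 with hb | hb | hb
    · have hb' : ((B k j : ℝ)) < 0 := by exact_mod_cast hb
      rw [if_neg (by push_neg; intro _; omega)]
      by_cases ha : a k ≤ 0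
      · rw [if_pos ⟨ha, hb.le⟩]
        have h1 : 0 ≤ a k * (B k j : ℝ) := by nlinarith
        rw [max_eq_left h1, Int.sign_eq_neg_one_iff_neg.mpr hb]
        push_cast; ring
      · push_neg at ha
        rw [if_neg (by push_neg; intro h; exact absurd h (not_le.mpr ha))]
        have h1 : a k * (B k j : ℝ) < 0 := mul_neg_of_pos_of_neg ha hb'
        rw [max_eq_right h1.le, Int.sign_eq_neg_one_iff_neg.mpr hb]
        ring
    · simp only [hb, Int.sign_zero, Int.cast_zero, zero_mul, add_zero, Int.cast_zero, mul_zero]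
      split_ifs <;> ring
    · have hb' : (0:ℝ) < (B k j : ℝ) := by exact_mod_cast hb
      rw [Int.sign_eq_one_iff_pos.mpr hb]
      by_cases ha : 0 ≤ a k
      · rw [if_pos ⟨ha, hb.le⟩, max_eq_left (mul_nonneg ha hb'.le)]; push_cast; ring
      · push_neg at ha
        rw [if_neg (by push_neg; intro h; linarith), if_neg (by push_neg; intro _; exact hb),
          max_eq_right (mul_nonpos_of_nonpos_of_nonneg ha.le hb'.le)]
        ring

lemma etaStep_continuous {n : ℕ} (B : Matrix (Fin n) (Fin n) ℤ) (k : Fin n) :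
    Continuous (etaStep B k) := by
  apply continuous_pi
  intro j
  simp only [etaStep_apply]
  by_cases hjk : j = k
  · simp only [if_pos hjk]; fun_prop
  · simp only [if_neg hjk]; fun_prop

lemma etaSeq_continuous {n : ℕ} (B : Matrix (Fin n) (Fin n) ℤ) (κ : List (Fin n)) :
    Continuous (etaSeq B κ) := by
  induction κ generalizing B with
  | nil => exact continuous_id
  | cons k κ ih => exact (ih (mutate B k)).comp (etaStep_continuous B k)


lemma dichotomy {ι : Type*} (S : Finset ι) (u : ι → ℝ)
    (h : ∀ i ∈ S, ∀ i' ∈ S, ¬(u i < 0 ∧ 0 < u i')) :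
    (∀ i ∈ S, 0 ≤ u i) ∨ (∀ i ∈ S, u i ≤ 0) := by
  by_cases he : ∃ i ∈ S, 0 < u i
  · left
    obtain ⟨i0, hi0, hpos⟩ := he
    intro i hi
    by_contra hneg
    exact h i hi i0 hi0 ⟨not_le.mp hneg, hpos⟩
  · right
    push_neg at he
    exact he

lemma max_sum {ι : Type*} (S : Finset ι) (c w : ι → ℝ) (hc : ∀ i ∈ S, 0 ≤ c i)
    (hw : (∀ i ∈ S, 0 ≤ w i) ∨ (∀ i ∈ S, w i ≤ 0)) :
    max (∑ i ∈ S, c i * w i) 0 = ∑ i ∈ S, c i * max (w i) 0 := by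
  rcases hw with hw | hw
  · rw [max_eq_left (Finset.sum_nonneg fun i hi => mul_nonneg (hc i hi) (hw i hi))]
    exact Finset.sum_congr rfl fun i hi => by rw [max_eq_left (hw i hi)]
  · rw [max_eq_right (Finset.sum_nonpos fun i hi => mul_nonpos_of_nonneg_of_nonpos (hc i hi) (hw i hi))]
    rw [Finset.sum_congr rfl fun i hi => by rw [max_eq_right (hw i hi), mul_zero]]
    simp

lemma etaStep_sum {n : ℕ} {ι : Type*} (B : Matrix (Fin n) (Fin n) ℤ) (k : Fin n)
    (S : Finset ι) (v : ι → Fin n → ℝ) (c : ι → ℝ) (hc : ∀ i ∈ S, 0 ≤ c i)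
    (h : ∀ i ∈ S, ∀ i' ∈ S, ¬(v i k < 0 ∧ 0 < v i' k)) :
    etaStep B k (∑ i ∈ S, c i • v i) = ∑ i ∈ S, c i • etaStep B k (v i) := by
  have hd := dichotomy S (fun i => v i k) h
  funext j
  by_cases hjk : j = k
  · simp only [Finset.sum_apply, Pi.smul_apply, smul_eq_mul, etaStep_apply, if_pos hjk,
      mul_neg]
    rw [← Finset.sum_neg_distrib]
  · simp only [Finset.sum_apply, Pi.smul_apply, smul_eq_mul, etaStep_apply, if_neg hjk]
    have key : max ((∑ i ∈ S, c i * v i k) * (B k j : ℝ)) 0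
        = ∑ i ∈ S, c i * max (v i k * (B k j : ℝ)) 0 := by
      rw [Finset.sum_mul]
      have h2 : ∀ i ∈ S, c i * v i k * (B k j : ℝ) = c i * (v i k * (B k j : ℝ)) := by
        intro i _; ring
      rw [Finset.sum_congr rfl h2]
      apply max_sum S c (fun i => v i k * (B k j : ℝ)) hc
      rcases le_or_gt 0 ((B k j : ℝ)) with hb | hb
      · rcases hd with hd | hd
        · exact Or.inl fun i hi => mul_nonneg (hd i hi) hb
        · exact Or.inr fun i hi => mul_nonpos_of_nonpos_of_nonneg (hd i hi) hb
      · rcases hd with hd | hd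
        · exact Or.inr fun i hi => mul_nonpos_of_nonneg_of_nonpos (hd i hi) hb.le
        · exact Or.inl fun i hi => by nlinarith [hd i hi]
    have expand : ∀ i ∈ S, c i * (v i j + (Int.sign (B k j) : ℝ) * max (v i k * (B k j : ℝ)) 0)
        = c i * v i j + (Int.sign (B k j) : ℝ) * (c i * max (v i k * (B k j : ℝ)) 0) := by
      intro i _; ring
    rw [Finset.sum_congr rfl expand, Finset.sum_add_distrib, ← Finset.mul_sum, ← key]

lemma etaSeq_sum {n : ℕ} {ι : Type*} (B : Matrix (Fin n) (Fin n) ℤ) (κ : List (Fin n))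
    (S : Finset ι) (v : ι → Fin n → ℝ) (c : ι → ℝ) (hc : ∀ i ∈ S, 0 ≤ c i)
    (h : ∀ (κ' : List (Fin n)) (j : Fin n), ∀ i ∈ S, ∀ i' ∈ S,
      ¬(etaSeq B κ' (v i) j < 0 ∧ 0 < etaSeq B κ' (v i') j)) :
    etaSeq B κ (∑ i ∈ S, c i • v i) = ∑ i ∈ S, c i • etaSeq B κ (v i) := by
  induction κ generalizing B v with
  | nil => rfl
  | cons k κ ih =>
    show etaSeq (mutate B k) κ (etaStep B k (∑ i ∈ S, c i • v i)) = _
    rw [etaStep_sum B k S v c hc (fun i hi i' hi' => h [] k i hi i' hi')]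
    exact ih (mutate B k) (fun i => etaStep B k (v i))
      (fun κ' j i hi i' hi' => h (k :: κ') j i hi i' hi')

lemma series_facts (t : ℕ → ℝ) (ht : ∀ k, 0 ≤ t k) {L : ℝ}
    (hL : Filter.Tendsto (fun m => ∑ k ∈ Finset.range m, t k) Filter.atTop (nhds L)) :
    0 ≤ L ∧ ∀ k, t k ≤ L := by
  have hmono : Monotone fun m => ∑ k ∈ Finset.range m, t k := by
    apply monotone_nat_of_le_succ
    intro m
    rw [Finset.sum_range_succ]
    linarith [ht m]
  have hle : ∀ m, ∑ k ∈ Finset.range m, t k ≤ L := fun m => hmono.ge_of_tendsto hL m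
  constructor
  · simpa using hle 0
  · intro k
    calc t k ≤ ∑ i ∈ Finset.range (k + 1), t i :=
          Finset.single_le_sum (fun i _ => ht i) (Finset.mem_range.mpr (Nat.lt_succ_self k))
      _ ≤ L := hle (k + 1)



/-- A set `C ⊆ ℝⁿ` is contained in some `B`-cone if and only if
`η_κ^B(C)` is sign-coherent for every finite sequence `κ` of indices. -/
theorem subset_bCone_iff_signCoherent {n : ℕ} (hn : 1 ≤ n)
    (B : Matrix (Fin n) (Fin n) ℤ) (hB : IsExchangeMatrix B) (C : Set (Fin n → ℝ)) :
    (∃ D, IsBCone B D ∧ C ⊆ D) ↔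
      ∀ κ : List (Fin n), SignCoherentSet (etaSeq B κ '' C) := by
  constructor
  · rintro ⟨D, ⟨E, ⟨a, rfl⟩, rfl⟩, hCD⟩ κ u hu w hw j ⟨hu1, hw1⟩
    obtain ⟨x, hxC, rfl⟩ := hu
    obtain ⟨y, hyC, rfl⟩ := hw
    have hf : Continuous fun z => etaSeq B κ z j :=
      (continuous_apply j).comp (etaSeq_continuous B κ)
    rcases lt_trichotomy (etaSeq B κ a j) 0 with hs | hs | hs
    · have hE : {a' | eqB B a a'} ⊆ {z | etaSeq B κ z j ≤ 0} := by
        intro z hz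
        have hsz : Real.sign (etaSeq B κ z j) = -1 := by
          rw [← hz κ j]; exact Real.sign_of_neg hs
        simp only [Set.mem_setOf_eq]
        by_contra hpos
        push_neg at hpos
        rw [Real.sign_of_pos hpos] at hsz
        norm_num at hsz
      have := closure_minimal hE (isClosed_le hf continuous_const) (hCD hyC)
      simp only [Set.mem_setOf_eq] at this
      linarith
    · have hE : {a' | eqB B a a'} ⊆ {z | etaSeq B κ z j = 0} := by
        intro z hz
        have hsz : Real.sign (etaSeq B κ z j) = 0 := by
          rw [← hz κ j, hs, Real.sign_zero]
        exact Real.sign_eq_zero_iff.mp hsz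
      have := closure_minimal hE (isClosed_eq hf continuous_const) (hCD hxC)
      simp only [Set.mem_setOf_eq] at this
      linarith
    · have hE : {a' | eqB B a a'} ⊆ {z | 0 ≤ etaSeq B κ z j} := by
        intro z hz
        have hsz : Real.sign (etaSeq B κ z j) = 1 := by
          rw [← hz κ j]; exact Real.sign_of_pos hs
        simp only [Set.mem_setOf_eq]
        by_contra hneg
        push_neg at hneg
        rw [Real.sign_of_neg hneg] at hsz
        norm_num at hsz
      have := closure_minimal hE (isClosed_le continuous_const hf) (hCD hxC)
      simp only [Set.mem_setOf_eq] at this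
      linarith
  · intro h
    rcases C.eq_empty_or_nonempty with rfl | ⟨x0, hx0⟩
    · exact ⟨closure {a' | eqB B 0 a'}, ⟨_, ⟨0, rfl⟩, rfl⟩, Set.empty_subset _⟩
    haveI : Nonempty C := ⟨⟨x0, hx0⟩⟩
    obtain ⟨u, hu⟩ := TopologicalSpace.exists_dense_seq C
    set f : ℕ → (Fin n → ℝ) := fun k => (u k : Fin n → ℝ) with hfdef
    have hfC : ∀ k, f k ∈ C := fun k => (u k).2
    have hdense : C ⊆ closure (Set.range f) := by
      intro x hx
      have h1 : (⟨x, hx⟩ : C) ∈ closure (Set.range u) := hu.closure_range ▸ Set.mem_univ _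
      have h2 := (image_closure_subset_closure_image continuous_subtype_val)
        (Set.mem_image_of_mem _ h1)
      rwa [← Set.range_comp] at h2
    set c : ℕ → ℝ := fun k => (1/2 : ℝ)^k * (1 + ‖f k‖)⁻¹ with hcdef
    have hcpos : ∀ k, 0 < c k :=
      fun k => mul_pos (pow_pos (by norm_num) k) (inv_pos.mpr (by positivity))
    have hsummable : Summable (fun k => c k • f k) := by
      apply Summable.of_norm_bounded
        (summable_geometric_of_lt_one (r := (1/2:ℝ)) (by norm_num) (by norm_num))
      intro k
      rw [norm_smul, Real.norm_of_nonneg (hcpos k).le]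
      have hfk : (0:ℝ) ≤ ‖f k‖ := norm_nonneg _
      have h2 : (1 + ‖f k‖)⁻¹ * ‖f k‖ ≤ 1 := by
        rw [inv_mul_le_iff₀ (by positivity)]
        linarith
      have h3 : (0:ℝ) ≤ (1/2:ℝ)^k := pow_nonneg (by norm_num) k
      calc (1/2:ℝ)^k * (1 + ‖f k‖)⁻¹ * ‖f k‖
          = (1/2:ℝ)^k * ((1 + ‖f k‖)⁻¹ * ‖f k‖) := by ring
        _ ≤ (1/2:ℝ)^k * 1 := mul_le_mul_of_nonneg_left h2 h3
        _ = (1/2:ℝ)^k := mul_one _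
    set a : Fin n → ℝ := ∑' k, c k • f k with hadef
    have htend : Filter.Tendsto (fun m => ∑ k ∈ Finset.range m, c k • f k)
        Filter.atTop (nhds a) := hsummable.hasSum.tendsto_sum_nat
    have hcoh : ∀ (κ' : List (Fin n)) (j : Fin n), ∀ k k' : ℕ,
        ¬(etaSeq B κ' (f k) j < 0 ∧ 0 < etaSeq B κ' (f k') j) :=
      fun κ' j k k' => h κ' _ (Set.mem_image_of_mem _ (hfC k)) _
        (Set.mem_image_of_mem _ (hfC k')) j
    have hLtend : ∀ (κ : List (Fin n)) (j : Fin n),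
        Filter.Tendsto (fun m => ∑ k ∈ Finset.range m, c k * etaSeq B κ (f k) j)
          Filter.atTop (nhds (etaSeq B κ a j)) := by
      intro κ j
      have h1 : Filter.Tendsto (fun m => etaSeq B κ (∑ k ∈ Finset.range m, c k • f k) j)
          Filter.atTop (nhds (etaSeq B κ a j)) :=
        (((continuous_apply j).comp (etaSeq_continuous B κ)).tendsto a).comp htend
      have h2 : ∀ m, etaSeq B κ (∑ k ∈ Finset.range m, c k • f k) j
          = ∑ k ∈ Finset.range m, c k * etaSeq B κ (f k) j := by
        intro m
        rw [etaSeq_sum B κ _ f c (fun i _ => (hcpos i).le)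
          (fun κ' j' i _ i' _ => hcoh κ' j' i i')]
        simp [Finset.sum_apply]
      simp only [h2] at h1
      exact h1
    have key : ∀ (κ : List (Fin n)) (j : Fin n) (k : ℕ),
        (etaSeq B κ a j = 0 → etaSeq B κ (f k) j = 0) ∧
        ¬(etaSeq B κ (f k) j < 0 ∧ 0 < etaSeq B κ a j) ∧
        ¬(etaSeq B κ a j < 0 ∧ 0 < etaSeq B κ (f k) j) := by
      intro κ j k
      by_cases hex : ∃ m, 0 < etaSeq B κ (f m) j
      · obtain ⟨m0, hm0⟩ := hex
        have hnn : ∀ m, 0 ≤ etaSeq B κ (f m) j := by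
          intro m
          by_contra hneg
          exact hcoh κ j m m0 ⟨not_le.mp hneg, hm0⟩
        obtain ⟨hL0, hterm⟩ := series_facts (fun m => c m * etaSeq B κ (f m) j)
          (fun m => mul_nonneg (hcpos m).le (hnn m)) (hLtend κ j)
        refine ⟨?_, ?_, ?_⟩
        · intro hL
          have h1 : c k * etaSeq B κ (f k) j ≤ 0 := by
            have := hterm k; rw [hL] at this; exact this
          have h2 : 0 ≤ c k * etaSeq B κ (f k) j := mul_nonneg (hcpos k).le (hnn k)
          have h3 : c k * etaSeq B κ (f k) j = 0 := le_antisymm h1 h2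
          rcases mul_eq_zero.mp h3 with h4 | h4
          · exact absurd h4 (hcpos k).ne'
          · exact h4
        · rintro ⟨h1, _⟩; exact absurd h1 (not_lt.mpr (hnn k))
        · rintro ⟨h1, _⟩; linarith
      · push_neg at hex
        have htneg : ∀ m, 0 ≤ -(c m * etaSeq B κ (f m) j) := by
          intro m
          have := mul_nonpos_of_nonneg_of_nonpos (hcpos m).le (hex m)
          linarith
        have hLneg : Filter.Tendsto (fun m => ∑ i ∈ Finset.range m,
            -(c i * etaSeq B κ (f i) j)) Filter.atTop (nhds (-(etaSeq B κ a j))) := by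
          have := (hLtend κ j).neg
          simp only [← Finset.sum_neg_distrib] at this
          exact this
        obtain ⟨hL0, hterm⟩ := series_facts _ htneg hLneg
        refine ⟨?_, ?_, ?_⟩
        · intro hL
          have h1 := hterm k
          rw [hL] at h1
          simp only [neg_zero] at h1
          have h2 := htneg k
          have h3 : c k * etaSeq B κ (f k) j = 0 := by linarith
          rcases mul_eq_zero.mp h3 with h4 | h4
          · exact absurd h4 (hcpos k).ne'
          · exact h4
        · rintro ⟨_, h2⟩; linarith
        · rintro ⟨_, h2⟩; exact absurd h2 (not_lt.mpr (hex k))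
    have hmem : ∀ (k : ℕ) (ε : ℝ), 0 < ε → eqB B a (f k + ε • a) := by
      intro k ε hε
      have hpair : ∀ κ, etaSeq B κ (f k + ε • a) = etaSeq B κ (f k) + ε • etaSeq B κ a := by
        intro κ
        have hco : ∀ (κ' : List (Fin n)) (j : Fin n), ∀ i ∈ (Finset.univ : Finset Bool),
            ∀ i' ∈ (Finset.univ : Finset Bool),
            ¬(etaSeq B κ' ((fun b => if b then f k else a) i) j < 0 ∧
              0 < etaSeq B κ' ((fun b => if b then f k else a) i') j) := by
          intro κ' j i _ i' _
          rcases i <;> rcases i' <;> simp only [if_true, if_false]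
          · rintro ⟨h1, h2⟩; linarith
          · exact (key κ' j k).2.2
          · exact (key κ' j k).2.1
          · rintro ⟨h1, h2⟩; linarith
        have := etaSeq_sum B κ (Finset.univ : Finset Bool)
          (fun b => if b then f k else a) (fun b => if b then 1 else ε)
          (fun b _ => by rcases b <;> simp [hε.le]) hco
        simpa [Fintype.sum_bool] using this
      intro κ j
      have hval : etaSeq B κ (f k + ε • a) j
          = etaSeq B κ (f k) j + ε * etaSeq B κ a j := by
        rw [hpair κ]; simp
      rw [hval]
      obtain ⟨k1, k2, k3⟩ := key κ j k
      rcases lt_trichotomy (etaSeq B κ a j) 0 with hs | hs | hs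
      · have hx : etaSeq B κ (f k) j ≤ 0 := by
          by_contra hh; exact k3 ⟨hs, not_le.mp hh⟩
        rw [Real.sign_of_neg hs, Real.sign_of_neg (by nlinarith)]
      · rw [hs, k1 hs]; simp
      · have hx : 0 ≤ etaSeq B κ (f k) j := by
          by_contra hh; exact k2 ⟨not_le.mp hh, hs⟩
        rw [Real.sign_of_pos hs, Real.sign_of_pos (by nlinarith)]
    refine ⟨closure {a' | eqB B a a'}, ⟨_, ⟨a, rfl⟩, rfl⟩, ?_⟩
    have hfmem : ∀ k, f k ∈ closure {a' | eqB B a a'} := by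
      intro k
      have htend2 : Filter.Tendsto (fun ε : ℝ => f k + ε • a)
          (nhdsWithin 0 (Set.Ioi 0)) (nhds (f k)) := by
        have hcont : Continuous fun ε : ℝ => f k + ε • a := by fun_prop
        have h0 := hcont.tendsto 0
        simp only [zero_smul, add_zero] at h0
        exact h0.mono_left nhdsWithin_le_nhds
      exact mem_closure_of_tendsto htend2
        (eventually_nhdsWithin_of_forall fun ε hε => hmem k ε hε)
    intro x hx
    exact closure_minimal (Set.range_subset_iff.mpr hfmem) isClosed_closure (hdense hx)

end MutationFanPaper
end
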